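/- If λ = iω with ω > 0 is a root of the characteristic equation λ + ηκã(e^{-λτ₁} + e^{-λτ₂}) = 0 with η, κ, ã, τ₁, τ₂ > 0, then ω(τ₁+τ₂) = (2n+1)π for some nonnegative integer n. -/
import Mathlib

open Complex Real

/-- A purely imaginary root iω (ω > 0) of λ + ηκã(e^{-λτ₁}+e^{-λτ₂}) = 0 must satisfy
ω(τ₁+τ₂) = (2n+1)π for some nonnegative integer n. -/
theorem imaginary_root_frequency (η κ a τ₁ τ₂ ω : ℝ) (hη : 0 < η) (hκ : 0 < κ)
    (ha : 0 < a) (hτ₁ : 0 < τ₁) (hτ₂ : 0 < τ₂) (hω : 0 < ω)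
    (hroot : (Complex.I * ω) + (η * κ * a : ℂ) *
      (Complex.exp (-(Complex.I * ω) * τ₁) + Complex.exp (-(Complex.I * ω) * τ₂)) = 0) :
    ∃ n : ℕ, ω * (τ₁ + τ₂) = (2 * n + 1) * Real.pi := by
  have hcpos : 0 < η * κ * a := by positivity
  have h1 : -(Complex.I * (ω:ℂ)) * τ₁ = ((-(ω*τ₁) : ℝ) : ℂ) * Complex.I := by
    push_cast; ring
  have h2 : -(Complex.I * (ω:ℂ)) * τ₂ = ((-(ω*τ₂) : ℝ) : ℂ) * Complex.I := by
    push_cast; ring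
  rw [h1, h2, Complex.exp_mul_I, Complex.exp_mul_I] at hroot
  have hre := congrArg Complex.re hroot
  have him := congrArg Complex.im hroot
  simp [Complex.add_re, Complex.add_im, Complex.mul_re, Complex.mul_im,
    ← Complex.ofReal_mul, Complex.cos_ofReal_re, Complex.cos_ofReal_im,
    Complex.sin_ofReal_re, Complex.sin_ofReal_im, Real.cos_neg, Real.sin_neg,
    hη.ne', hκ.ne', ha.ne'] at hre him
  rw [Real.cos_add_cos] at hre
  have hsin : Real.sin (ω * τ₁) + Real.sin (ω * τ₂) = ω / (η * κ * a) := by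
    field_simp; linarith
  have hss : Real.sin (ω*τ₁) + Real.sin (ω*τ₂)
      = 2 * Real.sin ((ω*τ₁ + ω*τ₂)/2) * Real.cos ((ω*τ₁ - ω*τ₂)/2) := by
    have h := Real.sin_sub_sin (ω*τ₁) (-(ω*τ₂))
    simp only [Real.sin_neg, sub_neg_eq_add, ← sub_eq_add_neg] at h
    exact h
  rw [hss] at hsin
  have hsinpos : 0 < 2 * Real.sin ((ω*τ₁ + ω*τ₂)/2) * Real.cos ((ω*τ₁ - ω*τ₂)/2) := by
    rw [hsin]; positivity
  have hcosδ : Real.cos ((ω*τ₁ - ω*τ₂)/2) ≠ 0 := by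
    intro h; rw [h] at hsinpos; simp at hsinpos
  have hcosθ : Real.cos ((ω*τ₁ + ω*τ₂)/2) = 0 := by
    rcases mul_eq_zero.1 hre with h | h
    · rcases mul_eq_zero.1 h with h' | h'
      · norm_num at h'
      · exact h'
    · exact absurd h hcosδ
  obtain ⟨k, hk⟩ := Real.cos_eq_zero_iff.1 hcosθ
  have hkey : ω * (τ₁ + τ₂) = (2 * k + 1) * π := by
    have : ω*τ₁ + ω*τ₂ = (2*k+1)*π := by
      field_simp at hk; linarith
    linarith [this]
  have hk0 : 0 ≤ k := by
    by_contra h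
    push_neg at h
    have hk1 : (2*(k:ℝ)+1) ≤ -1 := by
      have : (k:ℝ) ≤ -1 := by exact_mod_cast Int.le_of_lt_add_one (by simpa using h)
      linarith
    nlinarith [Real.pi_pos, mul_pos hω (add_pos hτ₁ hτ₂)]
  refine ⟨k.toNat, ?_⟩
  rw [hkey]
  have : ((k.toNat : ℤ) : ℝ) = (k : ℝ) := by rw [Int.toNat_of_nonneg hk0]
  push_cast at this ⊢
  rw [this]
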